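/- For any finite binary words A and B, and any bi-infinite binary configuration x, the lower density of occurrences of A in x is at least the lower density of occurrences of B in x times the density of occurrences of A in B: ρ₋(x,A) ≥ ρ₋(x,B)·ρ(B,A). The same holds for upper densities. -/

import Mathlib

open Filter
open scoped Classical

/-- Density ρ(B,A) of occurrences of the word A in the finite word B:
the number of positions at which A occurs as a factor of B, divided by |B|. -/
noncomputable def wordDensity (B A : List ℕ) : ℝ :=
  (((Finset.range B.length).filter
      (fun i => ∀ j : Fin A.length, B[i + (j : ℕ)]? = some (A.get j))).card : ℝ) / B.length

/-- Number of occurrences of the word A starting in the window x[-n,m],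
divided by the window length n+m+1. -/
noncomputable def occAvg (x : ℤ → ℕ) (A : List ℕ) (p : ℕ × ℕ) : ℝ :=
  (((Finset.Icc (-(p.1 : ℤ)) (p.2 : ℤ)).filter
      (fun i => ∀ j : Fin A.length, x (i + j) = A.get j)).card : ℝ) / (p.1 + p.2 + 1)

/-- Lower density ρ₋(x,A). -/
noncomputable def rhoMinusW (x : ℤ → ℕ) (A : List ℕ) : ℝ :=
  Filter.liminf (occAvg x A) (Filter.atTop ×ˢ Filter.atTop)

/-- Upper density ρ₊(x,A). -/
noncomputable def rhoPlusW (x : ℤ → ℕ) (A : List ℕ) : ℝ :=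
  Filter.limsup (occAvg x A) (Filter.atTop ×ˢ Filter.atTop)

namespace RhoEnclosureAux

lemma occAvg_nonneg (x : ℤ → ℕ) (A : List ℕ) (p : ℕ × ℕ) : 0 ≤ occAvg x A p := by
  unfold occAvg
  positivity

lemma card_Icc_window (n m : ℕ) :
    ((Finset.Icc (-(n : ℤ)) (m : ℤ)).card : ℝ) = n + m + 1 := by
  rw [Int.card_Icc]
  have h : ((m : ℤ) + 1 - -(n : ℤ)).toNat = n + m + 1 := by omega
  rw [h]
  push_cast
  ring

lemma occAvg_le_one (x : ℤ → ℕ) (A : List ℕ) (p : ℕ × ℕ) : occAvg x A p ≤ 1 := by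
  unfold occAvg
  have hpos : (0 : ℝ) < p.1 + p.2 + 1 := by positivity
  rw [div_le_one hpos]
  calc (((Finset.Icc (-(p.1 : ℤ)) (p.2 : ℤ)).filter
      (fun i => ∀ j : Fin A.length, x (i + j) = A.get j)).card : ℝ)
      ≤ ((Finset.Icc (-(p.1 : ℤ)) (p.2 : ℤ)).card : ℝ) :=
        Nat.cast_le.mpr (Finset.card_filter_le _ _)
    _ = p.1 + p.2 + 1 := card_Icc_window p.1 p.2

lemma wordDensity_nonneg (B A : List ℕ) : 0 ≤ wordDensity B A := by
  unfold wordDensity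
  positivity

lemma wordDensity_le_one (B A : List ℕ) : wordDensity B A ≤ 1 := by
  unfold wordDensity
  rcases Nat.eq_zero_or_pos B.length with h | h
  · rw [h]; simp
  · have hpos : (0 : ℝ) < B.length := by exact_mod_cast h
    rw [div_le_one hpos]
    calc (((Finset.range B.length).filter
        (fun i => ∀ j : Fin A.length, B[i + (j : ℕ)]? = some (A.get j))).card : ℝ)
        ≤ ((Finset.range B.length).card : ℝ) :=
          Nat.cast_le.mpr (Finset.card_filter_le _ _)
      _ = B.length := by rw [Finset.card_range]

/-- Key counting inequality: each occurrence of `B` in the window contributes all the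
occurrences of `A` inside `B`, and each occurrence of `A` in the extended window is
counted at most `|B|` times. -/
lemma count_key (x : ℤ → ℕ) (A B : List ℕ) (hL : 1 ≤ B.length) (n m : ℕ) :
    ((Finset.Icc (-(n : ℤ)) ((m : ℕ) : ℤ)).filter
        (fun i => ∀ j : Fin B.length, x (i + j) = B.get j)).card *
      ((Finset.range B.length).filter
        (fun i => ∀ j : Fin A.length, B[i + (j : ℕ)]? = some (A.get j))).card ≤
    ((Finset.Icc (-(n : ℤ)) ((m + B.length - 1 : ℕ) : ℤ)).filter
        (fun i => ∀ j : Fin A.length, x (i + j) = A.get j)).card * B.length := by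
  classical
  set sB : Finset ℤ := (Finset.Icc (-(n : ℤ)) ((m : ℕ) : ℤ)).filter
      (fun i => ∀ j : Fin B.length, x (i + j) = B.get j) with hsB
  set gJ : Finset ℕ := (Finset.range B.length).filter
      (fun i => ∀ j : Fin A.length, B[i + (j : ℕ)]? = some (A.get j)) with hgJ
  set sA : Finset ℤ := (Finset.Icc (-(n : ℤ)) ((m + B.length - 1 : ℕ) : ℤ)).filter
      (fun i => ∀ j : Fin A.length, x (i + j) = A.get j) with hsA
  set s : Finset (ℤ × ℕ) := sB ×ˢ gJ with hs
  set φ : ℤ × ℕ → ℤ := fun q => q.1 + q.2 with hφ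
  -- the image of φ consists of occurrences of A
  have himg : s.image φ ⊆ sA := by
    intro i hi
    rcases Finset.mem_image.mp hi with ⟨q, hq, rfl⟩
    rcases Finset.mem_product.mp hq with ⟨hp, hj⟩
    rcases Finset.mem_filter.mp hp with ⟨hpIcc, hpocc⟩
    rcases Finset.mem_filter.mp hj with ⟨hjr, hjgood⟩
    rw [Finset.mem_Icc] at hpIcc
    have hjlt : q.2 < B.length := Finset.mem_range.mp hjr
    rw [hsA, Finset.mem_filter, Finset.mem_Icc]
    refine ⟨⟨?_, ?_⟩, ?_⟩
    · show -(n : ℤ) ≤ q.1 + (q.2 : ℤ)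
      omega
    · show q.1 + (q.2 : ℤ) ≤ ((m + B.length - 1 : ℕ) : ℤ)
      omega
    · intro j'
      have h := hjgood j'
      rw [List.getElem?_eq_some_iff] at h
      rcases h with ⟨hlt, heq⟩
      have hocc := hpocc ⟨q.2 + (j' : ℕ), hlt⟩
      have harg : φ q + ((j' : ℕ) : ℤ) = q.1 + ((q.2 + (j' : ℕ) : ℕ) : ℤ) := by
        simp only [hφ]
        push_cast
        ring
      rw [harg, hocc]
      exact heq
  -- each fiber of φ has at most B.length elements
  have hfib : ∀ b ∈ s.image φ, (s.filter (fun q => φ q = b)).card ≤ B.length := by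
    intro b _
    have hle : (s.filter (fun q => φ q = b)).card ≤ (Finset.range B.length).card := by
      apply Finset.card_le_card_of_injOn (fun q => q.2)
      · intro q hq
        rcases Finset.mem_filter.mp hq with ⟨hq', _⟩
        rcases Finset.mem_product.mp hq' with ⟨_, hj⟩
        exact Finset.mem_of_mem_filter _ hj
      · intro q hq q' hq' h2
        rcases Finset.mem_filter.mp hq with ⟨_, hb⟩
        rcases Finset.mem_filter.mp hq' with ⟨_, hb'⟩
        have h2' : q.2 = q'.2 := h2
        have h1 : q.1 = q'.1 := by
          simp only [hφ] at hb hb'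
          omega
        exact Prod.ext h1 h2'
    simpa using hle
  have h1 : s.card ≤ B.length * (s.image φ).card :=
    Finset.card_le_mul_card_image s B.length hfib
  have h2 : (s.image φ).card ≤ sA.card := Finset.card_le_card himg
  have h3 : s.card = sB.card * gJ.card := Finset.card_product sB gJ
  calc sB.card * gJ.card = s.card := h3.symm
    _ ≤ B.length * (s.image φ).card := h1
    _ ≤ B.length * sA.card := Nat.mul_le_mul_left B.length h2
    _ = sA.card * B.length := Nat.mul_comm B.length sA.card

/-- Real-valued version of the key inequality. -/
lemma occAvg_key (x : ℤ → ℕ) (A B : List ℕ) (hL : 1 ≤ B.length) (n m : ℕ) :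
    occAvg x B (n, m) * wordDensity B A *
        ((n + m + 1 : ℝ) / (n + m + B.length)) ≤
      occAvg x A (n, m + B.length - 1) := by
  have key := count_key x A B hL n m
  have key' : ((((Finset.Icc (-(n : ℤ)) ((m : ℕ) : ℤ)).filter
        (fun i => ∀ j : Fin B.length, x (i + j) = B.get j)).card : ℝ) *
      (((Finset.range B.length).filter
        (fun i => ∀ j : Fin A.length, B[i + (j : ℕ)]? = some (A.get j))).card : ℝ)) ≤
      ((((Finset.Icc (-(n : ℤ)) ((m + B.length - 1 : ℕ) : ℤ)).filter
        (fun i => ∀ j : Fin A.length, x (i + j) = A.get j)).card : ℝ) * (B.length : ℝ)) := by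
    exact_mod_cast key
  have hLpos : (0 : ℝ) < B.length := by exact_mod_cast hL
  have h1 : (0 : ℝ) < (n : ℝ) + m + 1 := by positivity
  have h2 : (0 : ℝ) < (n : ℝ) + m + B.length := by positivity
  have hcast : ((m + B.length - 1 : ℕ) : ℝ) = (m : ℝ) + B.length - 1 := by
    have h : 1 ≤ m + B.length := by omega
    push_cast [Nat.cast_sub h]
    ring
  unfold occAvg wordDensity
  dsimp only
  rw [hcast]
  have h3 : (0 : ℝ) < (n : ℝ) + ((m : ℝ) + B.length - 1) + 1 := by linarith
  rw [div_mul_div_comm, div_mul_div_comm, div_le_div_iff₀ (by positivity) h3]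
  nlinarith [mul_le_mul_of_nonneg_right key'
    (by positivity : (0 : ℝ) ≤ ((n : ℝ) + m + 1) * ((n : ℝ) + m + B.length))]

lemma shift_map (c : ℕ) :
    Filter.map (fun p : ℕ × ℕ => (p.1, p.2 + c)) (atTop ×ˢ atTop) =
      (atTop ×ˢ atTop : Filter (ℕ × ℕ)) := by
  have h := Filter.prod_map_map_eq' (id : ℕ → ℕ) (fun m => m + c) atTop atTop
  rw [Filter.map_id, Filter.map_add_atTop_eq_nat] at h
  exact h.symm

/-- The main eventual estimate. -/
lemma main_est (x : ℤ → ℕ) (A B : List ℕ) (hL : 1 ≤ B.length) {ε : ℝ} (hε : 0 < ε) :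
    ∀ᶠ p in (atTop ×ˢ atTop : Filter (ℕ × ℕ)),
      occAvg x B p * wordDensity B A - ε ≤
        occAvg x A (p.1, p.2 + (B.length - 1)) := by
  have hLpos : (0 : ℝ) < B.length := by exact_mod_cast hL
  have hL1 : (1 : ℝ) ≤ B.length := by exact_mod_cast hL
  obtain ⟨N, hN⟩ := exists_nat_ge (2 * (B.length : ℝ) / ε)
  have hev : ∀ᶠ p in (atTop ×ˢ atTop : Filter (ℕ × ℕ)), N + 1 ≤ p.1 :=
    (eventually_ge_atTop (N + 1)).prod_inl atTop
  filter_upwards [hev] with p hp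
  obtain ⟨n, m⟩ := p
  simp only at hp ⊢
  have hmm : m + (B.length - 1) = m + B.length - 1 := by omega
  rw [hmm]
  have hkey := occAvg_key x A B hL n m
  have h1 : (0 : ℝ) < (n : ℝ) + m + 1 := by positivity
  have h2 : (0 : ℝ) < (n : ℝ) + m + B.length := by positivity
  set c : ℝ := ((n : ℝ) + m + 1) / ((n : ℝ) + m + B.length) with hc
  have hc1 : c ≤ 1 := by
    rw [hc, div_le_one h2]
    linarith
  have hc0 : 0 ≤ c := by positivity
  -- 1 - c ≤ ε
  have hcε : 1 - c ≤ ε := by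
    have hNpos : (0 : ℝ) < (N : ℝ) + 1 := by positivity
    have hn1 : (N : ℝ) + 1 ≤ (n : ℝ) := by exact_mod_cast hp
    have heq : 1 - c = ((B.length : ℝ) - 1) / ((n : ℝ) + m + B.length) := by
      rw [hc]
      field_simp
      ring
    rw [heq]
    have hm0 : (0 : ℝ) ≤ (m : ℝ) := by positivity
    have hb1 : ((B.length : ℝ) - 1) / ((n : ℝ) + m + B.length) ≤
        (B.length : ℝ) / ((N : ℝ) + 1) := by
      apply div_le_div₀ (le_of_lt hLpos) (by linarith) hNpos
      linarith
    have hb2 : (B.length : ℝ) / ((N : ℝ) + 1) ≤ ε := by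
      rw [div_le_iff₀ hNpos]
      rw [div_le_iff₀ hε] at hN
      nlinarith
    linarith
  have hBd0 : 0 ≤ occAvg x B (n, m) * wordDensity B A :=
    mul_nonneg (occAvg_nonneg x B _) (wordDensity_nonneg B A)
  have hBd1 : occAvg x B (n, m) * wordDensity B A ≤ 1 :=
    mul_le_one₀ (occAvg_le_one x B _) (wordDensity_nonneg B A) (wordDensity_le_one B A)
  nlinarith [hkey, mul_nonneg (sub_nonneg.mpr hBd1) (sub_nonneg.mpr hc1)]

end RhoEnclosureAux

open RhoEnclosureAux in
/-- ρ±(x,A) ≥ ρ±(x,B)·ρ(B,A) for any finite binary words A, B and any binary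
configuration x. -/
theorem rho_enclosure (x : ℤ → ℕ) (hx : ∀ i, x i ≤ 1)
    (A B : List ℕ) (hA : ∀ a ∈ A, a ≤ 1) (hB : ∀ b ∈ B, b ≤ 1) :
    rhoMinusW x A ≥ rhoMinusW x B * wordDensity B A ∧
    rhoPlusW x A ≥ rhoPlusW x B * wordDensity B A := by
  classical
  have hcoA : (atTop ×ˢ atTop : Filter (ℕ × ℕ)).IsCoboundedUnder (· ≥ ·) (occAvg x A) :=
    Filter.isCoboundedUnder_ge_of_le _ (x := 1) (fun p => occAvg_le_one x A p)
  have hcoB : (atTop ×ˢ atTop : Filter (ℕ × ℕ)).IsCoboundedUnder (· ≤ ·) (occAvg x B) :=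
    Filter.isCoboundedUnder_le_of_le _ (x := 0) (fun p => occAvg_nonneg x B p)
  have hbdAle : (atTop ×ˢ atTop : Filter (ℕ × ℕ)).IsBoundedUnder (· ≤ ·) (occAvg x A) :=
    Filter.isBoundedUnder_of ⟨1, fun p => occAvg_le_one x A p⟩
  have hbdBge : (atTop ×ˢ atTop : Filter (ℕ × ℕ)).IsBoundedUnder (· ≥ ·) (occAvg x B) :=
    Filter.isBoundedUnder_of ⟨0, fun p => occAvg_nonneg x B p⟩
  have hd0 := wordDensity_nonneg B A
  have hd1 := wordDensity_le_one B A
  rcases Nat.eq_zero_or_pos B.length with hL0 | hL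
  · -- degenerate case: B is empty, wordDensity = 0
    have hd : wordDensity B A = 0 := by
      unfold wordDensity
      rw [hL0]
      simp
    rw [hd, mul_zero, mul_zero]
    constructor
    · exact Filter.le_liminf_of_le hcoA
        (Filter.Eventually.of_forall (fun p => occAvg_nonneg x A p))
    · exact Filter.le_limsup_of_frequently_le
        ((Filter.Eventually.of_forall (fun p => occAvg_nonneg x A p)).frequently) hbdAle
  · -- main case
    have hmap : Filter.map (fun p : ℕ × ℕ => (p.1, p.2 + (B.length - 1)))
        (atTop ×ˢ atTop) = (atTop ×ˢ atTop : Filter (ℕ × ℕ)) := shift_map (B.length - 1)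
    constructor
    · -- liminf part
      rw [ge_iff_le]
      apply le_of_forall_sub_le
      intro ε hε
      have hfrB : ∀ᶠ p in (atTop ×ˢ atTop : Filter (ℕ × ℕ)),
          rhoMinusW x B - ε / 2 < occAvg x B p := by
        apply Filter.eventually_lt_of_lt_liminf _ hbdBge
        have : rhoMinusW x B = liminf (occAvg x B) (atTop ×ˢ atTop) := rfl
        linarith [this ▸ (by linarith : rhoMinusW x B - ε / 2 < rhoMinusW x B)]
      have hev2 := main_est x A B hL (ε := ε / 2) (by linarith)
      have hcomb : ∀ᶠ p in (atTop ×ˢ atTop : Filter (ℕ × ℕ)),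
          rhoMinusW x B * wordDensity B A - ε ≤
            occAvg x A (p.1, p.2 + (B.length - 1)) := by
        filter_upwards [hfrB, hev2] with p h1 h2
        have h3 : (rhoMinusW x B - ε / 2) * wordDensity B A ≤
            occAvg x B p * wordDensity B A :=
          mul_le_mul_of_nonneg_right (le_of_lt h1) hd0
        nlinarith
      have hev3 : ∀ᶠ q in (atTop ×ˢ atTop : Filter (ℕ × ℕ)),
          rhoMinusW x B * wordDensity B A - ε ≤ occAvg x A q := by
        rw [← hmap]
        exact Filter.eventually_map.mpr hcomb
      exact Filter.le_liminf_of_le hcoA hev3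
    · -- limsup part
      rw [ge_iff_le]
      apply le_of_forall_sub_le
      intro ε hε
      have hfrB : ∃ᶠ p in (atTop ×ˢ atTop : Filter (ℕ × ℕ)),
          rhoPlusW x B - ε / 2 < occAvg x B p := by
        apply Filter.frequently_lt_of_lt_limsup hcoB
        have : rhoPlusW x B = limsup (occAvg x B) (atTop ×ˢ atTop) := rfl
        linarith [this ▸ (by linarith : rhoPlusW x B - ε / 2 < rhoPlusW x B)]
      have hev2 := main_est x A B hL (ε := ε / 2) (by linarith)
      have hcomb : ∃ᶠ p in (atTop ×ˢ atTop : Filter (ℕ × ℕ)),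
          rhoPlusW x B * wordDensity B A - ε ≤
            occAvg x A (p.1, p.2 + (B.length - 1)) := by
        apply (hfrB.and_eventually hev2).mono
        rintro p ⟨h1, h2⟩
        have h3 : (rhoPlusW x B - ε / 2) * wordDensity B A ≤
            occAvg x B p * wordDensity B A :=
          mul_le_mul_of_nonneg_right (le_of_lt h1) hd0
        nlinarith
      have hfr3 : ∃ᶠ q in (atTop ×ˢ atTop : Filter (ℕ × ℕ)),
          rhoPlusW x B * wordDensity B A - ε ≤ occAvg x A q := by
        rw [← hmap]
        exact Filter.frequently_map.mpr hcomb
      exact Filter.le_limsup_of_frequently_le hfr3 hbdAle
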